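/- Let (m_i)_{i∈ℕ} be a sequence of natural numbers with m_0 = 0 and m_{i+1} > 2^{m_i} for all i, and let b̄ ∈ divs satisfy b_ℓ ≤ 2^{−m_i} for all i and all ℓ ≥ m_{i+1}. Define the set of discretized divergent series divs^m_discr = { ē ∈ divs : for every i ≥ 1 and every ℓ ∈ [m_i, m_{i+1}), e_ℓ ∈ { j/2^{m_{i+1}} : j = 0, 1, …, 2^{m_{i+1}−m_{i−1}} } }. Then divs^m_discr is dense below b̄ in (divs, ≤*): for every c̄ ∈ divs with c̄ ≤* b̄ there exists ē ∈ divs^m_discr with ē ≤* c̄. -/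

import Mathlib

open Filter

/-- `Divs c` says that `c` is a sequence of nonnegative reals converging to `0`
whose series diverges, i.e. `c ∈ divs`. -/
def Divs (c : ℕ → ℝ) : Prop :=
  (∀ n, 0 ≤ c n) ∧ Tendsto c atTop (nhds 0) ∧
    Tendsto (fun N => ∑ n ∈ Finset.range N, c n) atTop atTop

/-- `LeStar d c` is the eventual dominance relation `d ≤* c`. -/
def LeStar (d c : ℕ → ℝ) : Prop := ∀ᶠ n in atTop, d n ≤ c n

/-- Membership in the set of discretized divergent series `divs^m̄_discr`:
`e ∈ divs` and for every `i ≥ 1` and `ℓ ∈ [m_i, m_{i+1})`, the value `e ℓ` is of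
the form `j/2^{m_{i+1}}` for some `0 ≤ j ≤ 2^{m_{i+1} − m_{i−1}}`. -/
def MemDivsDiscr (m : ℕ → ℕ) (e : ℕ → ℝ) : Prop :=
  Divs e ∧ ∀ i, 1 ≤ i → ∀ ℓ ∈ Set.Ico (m i) (m (i + 1)),
    ∃ j : ℕ, j ≤ 2 ^ (m (i + 1) - m (i - 1)) ∧ e ℓ = (j : ℝ) / 2 ^ m (i + 1)

/-- The set of discretized divergent series is dense below `b̄` in `(divs, ≤*)`,
where `m_0 = 0`, `m_{i+1} > 2^{m_i}`, and `b_ℓ ≤ 2^{−m_i}` for all `ℓ ≥ m_{i+1}`. -/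
theorem divsDiscr_dense_below (m : ℕ → ℕ) (hm0 : m 0 = 0)
    (hm : ∀ i, 2 ^ m i < m (i + 1))
    (b : ℕ → ℝ) (hb : Divs b)
    (hbd : ∀ i, ∀ ℓ, m (i + 1) ≤ ℓ → b ℓ ≤ 1 / 2 ^ m i)
    (c : ℕ → ℝ) (hc : Divs c) (hcb : LeStar c b) :
    ∃ e : ℕ → ℝ, MemDivsDiscr m e ∧ LeStar e c := by
  classical
  obtain ⟨hc0, hclim, hcsum⟩ := hc
  obtain ⟨hb0, -, -⟩ := hb
  have hmono : StrictMono m := strictMono_nat_of_lt_succ fun i =>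
    lt_of_le_of_lt (Nat.lt_two_pow_self (n := m i)).le (hm i)
  have hge : ∀ i, i ≤ m i := by
    intro i
    induction i with
    | zero => exact Nat.zero_le _
    | succ n ih => exact Nat.succ_le_of_lt (lt_of_le_of_lt ih (hmono (Nat.lt_succ_self n)))
  set d : ℕ → ℝ := fun n => min (c n) (b n) with hd
  have hd0 : ∀ n, 0 ≤ d n := fun n => le_min (hc0 n) (hb0 n)
  set I : ℕ → ℕ := fun ℓ => Nat.findGreatest (fun i => m i ≤ ℓ) ℓ with hIdef
  have hI1 : ∀ ℓ, m (I ℓ) ≤ ℓ := by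
    intro ℓ
    have h0 : (fun i => m i ≤ ℓ) 0 := by simp [hm0]
    exact Nat.findGreatest_spec (P := fun i => m i ≤ ℓ) (n := ℓ) (Nat.zero_le ℓ) h0
  have hI2 : ∀ ℓ, ℓ < m (I ℓ + 1) := by
    intro ℓ
    by_contra h
    push_neg at h
    exact Nat.findGreatest_is_greatest (Nat.lt_succ_self _) (le_trans (hge _) h) h
  set e : ℕ → ℝ := fun ℓ => (⌊d ℓ * 2 ^ m (I ℓ + 1)⌋₊ : ℝ) / 2 ^ m (I ℓ + 1) with he
  have he0 : ∀ ℓ, 0 ≤ e ℓ := fun ℓ => div_nonneg (Nat.cast_nonneg _) (by positivity)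
  have hed : ∀ ℓ, e ℓ ≤ d ℓ := by
    intro ℓ
    rw [he, div_le_iff₀ (by positivity)]
    exact Nat.floor_le (mul_nonneg (hd0 ℓ) (by positivity))
  have hec : ∀ ℓ, e ℓ ≤ c ℓ := fun ℓ => (hed ℓ).trans (min_le_left _ _)
  have helim : Tendsto e atTop (nhds 0) := by
    have := tendsto_of_tendsto_of_tendsto_of_le_of_le
      (tendsto_const_nhds : Tendsto (fun _ : ℕ => (0:ℝ)) atTop (nhds 0)) hclim he0 hec
    exact this
  -- error bound for each ℓ
  have herr : ∀ ℓ, d ℓ - (1/2 : ℝ) ^ (ℓ + 1) ≤ e ℓ := by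
    intro ℓ
    have hk : ℓ + 1 ≤ m (I ℓ + 1) := hI2 ℓ
    have h2k : (2:ℝ) ^ (ℓ + 1) ≤ 2 ^ m (I ℓ + 1) :=
      pow_le_pow_right₀ (by norm_num) hk
    have hfl : d ℓ * 2 ^ m (I ℓ + 1) - 1 ≤ (⌊d ℓ * 2 ^ m (I ℓ + 1)⌋₊ : ℝ) := by
      have := Nat.lt_floor_add_one (d ℓ * 2 ^ m (I ℓ + 1))
      linarith
    have hpos : (0:ℝ) < 2 ^ m (I ℓ + 1) := by positivity
    rw [he]
    rw [le_div_iff₀ hpos]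
    have h1 : (1/2 : ℝ) ^ (ℓ + 1) * 2 ^ m (I ℓ + 1) ≥ 1 := by
      rw [one_div, inv_pow, ge_iff_le, ← div_le_iff₀' (by positivity)]
      simpa using h2k
    nlinarith [hd0 ℓ]
  obtain ⟨N₀, hN₀⟩ := eventually_atTop.mp hcb
  have hde : ∀ n, N₀ ≤ n → d n = c n := fun n hn => min_eq_left (hN₀ n hn)
  -- divergence of partial sums of e
  have hesum : Tendsto (fun N => ∑ n ∈ Finset.range N, e n) atTop atTop := by
    set K : ℝ := (∑ n ∈ Finset.range N₀, c n) + 1 with hK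
    have key : ∀ N, (∑ n ∈ Finset.range N, c n) - K ≤ ∑ n ∈ Finset.range N, e n := by
      intro N
      have hterm : ∀ n, c n - e n ≤ (if n < N₀ then c n else 0) + (1/2 : ℝ) ^ (n + 1) := by
        intro n
        by_cases hn : n < N₀
        · simp only [hn, if_pos]
          have := he0 n
          have : c n - e n ≤ c n := by linarith
          have hp : (0:ℝ) ≤ (1/2 : ℝ) ^ (n + 1) := by positivity
          linarith
        · simp only [hn, if_neg, not_false_iff]
          push_neg at hn
          have := herr n
          rw [hde n hn] at this
          linarith
      have h1 : ∑ n ∈ Finset.range N, (c n - e n)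
          ≤ ∑ n ∈ Finset.range N, ((if n < N₀ then c n else 0) + (1/2 : ℝ) ^ (n + 1)) :=
        Finset.sum_le_sum fun n _ => hterm n
      rw [Finset.sum_add_distrib] at h1
      have h2 : ∑ n ∈ Finset.range N, (if n < N₀ then c n else 0)
          ≤ ∑ n ∈ Finset.range N₀, c n := by
        rw [← Finset.sum_filter]
        apply Finset.sum_le_sum_of_subset_of_nonneg
        · intro x hx
          simp only [Finset.mem_filter, Finset.mem_range] at hx ⊢
          exact hx.2
        · intro x _ _
          exact hc0 x
      have h3 : ∑ n ∈ Finset.range N, (1/2 : ℝ) ^ (n + 1) ≤ 1 := by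
        have : ∑ n ∈ Finset.range N, (1/2 : ℝ) ^ (n + 1)
            = (1/2) * ∑ n ∈ Finset.range N, (1/2 : ℝ) ^ n := by
          rw [Finset.mul_sum]
          apply Finset.sum_congr rfl
          intro n _
          ring
        rw [this]
        have := sum_geometric_two_le N
        linarith
      rw [Finset.sum_sub_distrib] at h1
      rw [hK]
      linarith
    have hbase : Tendsto (fun N => (∑ n ∈ Finset.range N, c n) - K) atTop atTop :=
      tendsto_atTop_add_const_right _ (-K) hcsum |>.congr (by intro N; ring)
    exact tendsto_atTop_mono key hbase
  refine ⟨e, ⟨⟨he0, helim, hesum⟩, ?_⟩, Eventually.of_forall hec⟩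
  intro i hi ℓ hℓ
  obtain ⟨hℓ1, hℓ2⟩ := hℓ
  have hIℓ : I ℓ = i := by
    rcases lt_trichotomy (I ℓ) i with h | h | h
    · exfalso
      have : m (I ℓ + 1) ≤ m i := hmono.monotone (by omega)
      have := hI2 ℓ
      omega
    · exact h
    · exfalso
      have : m (i + 1) ≤ m (I ℓ) := hmono.monotone (by omega)
      have := hI1 ℓ
      omega
  refine ⟨⌊d ℓ * 2 ^ m (I ℓ + 1)⌋₊, ?_, by simp only [he, hIℓ]⟩
  rw [hIℓ]
  have hble : d ℓ ≤ 1 / 2 ^ m (i - 1) := by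
    have : m ((i - 1) + 1) ≤ ℓ := by
      have : (i - 1) + 1 = i := by omega
      rw [this]; exact hℓ1
    exact (min_le_right _ _).trans (hbd (i - 1) ℓ this)
  have hmm : m (i - 1) ≤ m (i + 1) := hmono.monotone (by omega)
  have hkey : d ℓ * 2 ^ m (i + 1) ≤ ((2 ^ (m (i + 1) - m (i - 1)) : ℕ) : ℝ) := by
    push_cast
    have h2 : (2:ℝ) ^ (m (i + 1) - m (i - 1)) * 2 ^ m (i - 1) = 2 ^ m (i + 1) := by
      rw [← pow_add]
      congr 1
      omega
    calc d ℓ * 2 ^ m (i + 1)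
        ≤ (1 / 2 ^ m (i - 1)) * 2 ^ m (i + 1) :=
          mul_le_mul_of_nonneg_right hble (by positivity)
      _ = 2 ^ (m (i + 1) - m (i - 1)) := by
          rw [← h2]; field_simp
  calc ⌊d ℓ * 2 ^ m (i + 1)⌋₊ ≤ ⌊((2 ^ (m (i + 1) - m (i - 1)) : ℕ) : ℝ)⌋₊ :=
        Nat.floor_le_floor hkey
    _ = 2 ^ (m (i + 1) - m (i - 1)) := Nat.floor_natCast _
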